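/- Let (C,S,E) be a connected bipartite graph and μ_C, μ_S fully-supported probability measures on C, S. In the flow network N (source i with arcs (i,c) of capacity μ_C(c), sink f with arcs (s,f) of capacity μ_S(s), infinite capacity on E), there exists a flow of value 1 that is strictly positive on every edge of E if and only if the strict conditions NCond hold: μ_C(U) < μ_S(S(U)) for every proper subset U ⊊ C and μ_S(V) < μ_C(C(V)) for every proper subset V ⊊ S. -/

import Mathlib

/-!
STATEMENT 5.  In the same flow network, there exists a flow of value 1 which
is strictly positive on every edge of E iff the strict conditions NCond hold:
μ_C(U) < μ_S(S(U)) for every nonempty proper U ⊊ C and μ_S(V) < μ_C(C(V))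
for every nonempty proper V ⊊ S.  (Connectedness of (C,S,E) is assumed.)
-/

open Finset Relation

/-- adjacency of the bipartite graph on the vertex set C ⊕ S. -/
def bipAdj {C S : Type*} (E : Finset (C × S)) : (C ⊕ S) → (C ⊕ S) → Prop :=
  fun a b => match a, b with
  | .inl c, .inr s => (c, s) ∈ E
  | .inr s, .inl c => (c, s) ∈ E
  | _, _ => False


section Aux
set_option linter.unusedSectionVars false
variable {C S : Type*} [Fintype C] [Fintype S] [DecidableEq C] [DecidableEq S]

private def rsum (T : C × S → ℝ) (c : C) : ℝ := ∑ s : S, T (c, s)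
private def csum (T : C × S → ℝ) (s : S) : ℝ := ∑ c : C, T (c, s)

private def resStep (E : Finset (C × S)) (T : C × S → ℝ) : (C ⊕ S) → (C ⊕ S) → Prop
  | .inl c, .inr s => (c, s) ∈ E
  | .inr s, .inl c => 0 < T (c, s)
  | _, _ => False

private def indCv : (C ⊕ S) → C → ℝ
  | .inl c', c => if c' = c then 1 else 0
  | _, _ => 0

private def indSv : (C ⊕ S) → S → ℝ
  | .inr s', s => if s' = s then 1 else 0
  | _, _ => 0

private lemma sum_ite_pair_s (c : C) (s : S) (x : C) (δ : ℝ) :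
    ∑ s' : S, (if ((x, s') : C × S) = (c, s) then δ else 0) = if x = c then δ else 0 := by
  rcases eq_or_ne x c with h | h
  · subst h; simp [Prod.ext_iff]
  · simp [Prod.ext_iff, h]

private lemma sum_ite_pair_c (c : C) (s : S) (y : S) (δ : ℝ) :
    ∑ x : C, (if ((x, y) : C × S) = (c, s) then δ else 0) = if y = s then δ else 0 := by
  rcases eq_or_ne y s with h | h
  · subst h; simp [Prod.ext_iff]
  · simp [Prod.ext_iff, h]

private lemma aug (E : Finset (C × S)) (T : C × S → ℝ)
    (hT0 : ∀ p, 0 ≤ T p) (hsupp : ∀ p, p ∉ E → T p = 0) (c0 : C) (b : C ⊕ S)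
    (h : ReflTransGen (resStep E T) (.inl c0) b) :
    ∃ (n : ℕ) (ε : ℝ), 0 < ε ∧ ∀ δ : ℝ, 0 < δ → δ ≤ ε → ∃ T' : C × S → ℝ,
      (∀ p, 0 ≤ T' p) ∧ (∀ p, T p - n * δ ≤ T' p) ∧ (∀ p, p ∉ E → T' p = T p) ∧
      (∀ c, rsum T' c = rsum T c + δ * ((if c = c0 then 1 else 0) - indCv b c)) ∧
      (∀ s, csum T' s = csum T s + δ * indSv b s) := by
  induction h with
  | refl =>
      refine ⟨0, 1, one_pos, fun δ hδ hδ1 => ⟨T, hT0, fun p => by simp, fun p _ => rfl,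
        fun c => ?_, fun s => by simp [indSv]⟩⟩
      rcases eq_or_ne c c0 with h | h
      · subst h; simp [indCv]
      · simp [indCv, h, Ne.symm h]
  | @tail b b' hab step ih =>
      obtain ⟨n, ε, hε, H⟩ := ih
      match b, b', step with
      | .inl c, .inr s, step =>
          refine ⟨n + 1, ε, hε, fun δ hδ hδε => ?_⟩
          obtain ⟨T', h0, hlow, hoff, hr, hs⟩ := H δ hδ hδε
          have hcast : ((n + 1 : ℕ) : ℝ) = (n : ℝ) + 1 := by push_cast; ring
          refine ⟨fun p => T' p + (if p = (c, s) then δ else 0), ?_, ?_, ?_, ?_, ?_⟩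
          · intro p; have := h0 p; dsimp only; split <;> linarith
          · intro p; have := hlow p; dsimp only; rw [hcast]; split <;> linarith
          · intro p hp
            have hne : p ≠ (c, s) := by rintro rfl; exact hp step
            simp [hne, hoff p hp]
          · intro x
            have heq : rsum (fun p => T' p + (if p = (c, s) then δ else 0)) x
                = rsum T' x + (if x = c then δ else 0) := by
              simp only [rsum, Finset.sum_add_distrib, sum_ite_pair_s]
            rw [heq, hr x]
            by_cases h : x = c <;> by_cases h' : x = c0 <;>
              simp [indCv, indSv, h, h', eq_comm] <;> first | (intro h2; exact absurd h2.symm h) | (split_ifs with h2 <;> first | ring1 | (exact absurd h2.symm h))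
          · intro y
            have heq : csum (fun p => T' p + (if p = (c, s) then δ else 0)) y
                = csum T' y + (if y = s then δ else 0) := by
              simp only [csum, Finset.sum_add_distrib, sum_ite_pair_c]
            rw [heq, hs y]
            by_cases h : y = s <;> simp [indCv, indSv, h, eq_comm] <;> first | (intro h2; exact absurd h2.symm h) | (split_ifs with h2 <;> first | ring1 | (exact absurd h2.symm h))
      | .inr s, .inl c, step =>
          have hTcs : (0 : ℝ) < T (c, s) := step
          have hE : (c, s) ∈ E := by
            by_contra hEc; exact absurd (hsupp _ hEc) (ne_of_gt hTcs)
          refine ⟨n + 1, min ε (T (c, s) / (n + 1)), lt_min hε (div_pos hTcs (by positivity)),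
            fun δ hδ hδε => ?_⟩
          obtain ⟨T', h0, hlow, hoff, hr, hs⟩ := H δ hδ (le_trans hδε (min_le_left _ _))
          have hδT : ((n : ℝ) + 1) * δ ≤ T (c, s) := by
            have h2 := le_trans hδε (min_le_right _ _)
            rw [le_div_iff₀ (by positivity)] at h2
            linarith
          have hcast : ((n + 1 : ℕ) : ℝ) = (n : ℝ) + 1 := by push_cast; ring
          refine ⟨fun p => T' p + (if p = (c, s) then -δ else 0), ?_, ?_, ?_, ?_, ?_⟩
          · intro p
            dsimp only
            rcases eq_or_ne p (c, s) with h | h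
            · subst h
              have := hlow (c, s)
              rw [if_pos rfl]
              linarith
            · rw [if_neg h]; simpa using h0 p
          · intro p; have := hlow p; dsimp only; rw [hcast]; split <;> linarith
          · intro p hp
            have hne : p ≠ (c, s) := by rintro rfl; exact hp hE
            simp [hne, hoff p hp]
          · intro x
            have heq : rsum (fun p => T' p + (if p = (c, s) then -δ else 0)) x
                = rsum T' x + (if x = c then -δ else 0) := by
              simp only [rsum, Finset.sum_add_distrib, sum_ite_pair_s]
            rw [heq, hr x]
            by_cases h : x = c <;> by_cases h' : x = c0 <;>
              simp [indCv, indSv, h, h', eq_comm] <;> first | (intro h2; exact absurd h2.symm h) | (split_ifs with h2 <;> first | ring1 | (exact absurd h2.symm h))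
          · intro y
            have heq : csum (fun p => T' p + (if p = (c, s) then -δ else 0)) y
                = csum T' y + (if y = s then -δ else 0) := by
              simp only [csum, Finset.sum_add_distrib, sum_ite_pair_c]
            rw [heq, hs y]
            by_cases h : y = s <;> simp [indCv, indSv, h, eq_comm] <;> first | (intro h2; exact absurd h2.symm h) | (split_ifs with h2 <;> first | ring1 | (exact absurd h2.symm h))

end Aux

section Core
variable {C S : Type*} [Fintype C] [Fintype S] [DecidableEq C] [DecidableEq S]

private def totm (T : C × S → ℝ) : ℝ := ∑ c : C, rsum T c

private lemma totm_eq_csum (T : C × S → ℝ) : totm T = ∑ s : S, csum T s := by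
  simp only [totm, rsum, csum]; exact Finset.sum_comm

private lemma exists_max (E : Finset (C × S)) (νC : C → ℝ) (νS : S → ℝ)
    (hνC : ∀ c, 0 ≤ νC c) (hνS : ∀ s, 0 ≤ νS s) :
    ∃ T : C × S → ℝ, ((∀ p, 0 ≤ T p) ∧ (∀ p, p ∉ E → T p = 0) ∧ (∀ c, rsum T c ≤ νC c) ∧
      (∀ s, csum T s ≤ νS s)) ∧
      ∀ T' : C × S → ℝ, (∀ p, 0 ≤ T' p) → (∀ p, p ∉ E → T' p = 0) → (∀ c, rsum T' c ≤ νC c) →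
        (∀ s, csum T' s ≤ νS s) → totm T' ≤ totm T := by
  classical
  set P : Set (C × S → ℝ) := {T | (∀ p, 0 ≤ T p) ∧ (∀ p, p ∉ E → T p = 0) ∧
    (∀ c, rsum T c ≤ νC c) ∧ (∀ s, csum T s ≤ νS s)} with hP
  have hPsub : P ⊆ Set.Icc (fun _ => (0 : ℝ)) (fun p => νC p.1) := by
    rintro T ⟨h0, _, hr, _⟩
    constructor
    · intro p; exact h0 p
    · intro p
      calc T p = T (p.1, p.2) := by rw [Prod.mk.eta]
      _ ≤ rsum T p.1 := Finset.single_le_sum (fun s _ => h0 (p.1, s)) (Finset.mem_univ p.2)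
      _ ≤ νC p.1 := hr p.1
  have h1 : IsClosed {T : C × S → ℝ | ∀ p, 0 ≤ T p} := by
    rw [Set.setOf_forall]
    exact isClosed_iInter fun p => isClosed_le continuous_const (continuous_apply p)
  have h2 : IsClosed {T : C × S → ℝ | ∀ p, p ∉ E → T p = 0} := by
    rw [Set.setOf_forall]
    refine isClosed_iInter fun p => ?_
    by_cases hp : p ∈ E
    · have : {T : C × S → ℝ | p ∉ E → T p = 0} = Set.univ := by ext T; simp [hp]
      rw [this]; exact isClosed_univ
    · have : {T : C × S → ℝ | p ∉ E → T p = 0} = {T | T p = 0} := by ext T; simp [hp]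
      rw [this]; exact isClosed_eq (continuous_apply p) continuous_const
  have hrc : ∀ c : C, Continuous fun T : C × S → ℝ => rsum T c := by
    intro c; unfold rsum; exact continuous_finset_sum _ fun s _ => continuous_apply (c, s)
  have hcc : ∀ s : S, Continuous fun T : C × S → ℝ => csum T s := by
    intro s; unfold csum; exact continuous_finset_sum _ fun c _ => continuous_apply (c, s)
  have h3 : IsClosed {T : C × S → ℝ | ∀ c, rsum T c ≤ νC c} := by
    rw [Set.setOf_forall]
    exact isClosed_iInter fun c => isClosed_le (hrc c) continuous_const
  have h4 : IsClosed {T : C × S → ℝ | ∀ s, csum T s ≤ νS s} := by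
    rw [Set.setOf_forall]
    exact isClosed_iInter fun s => isClosed_le (hcc s) continuous_const
  have hclosed : IsClosed P := by
    rw [hP, Set.setOf_and, Set.setOf_and, Set.setOf_and]
    exact h1.inter (h2.inter (h3.inter h4))
  have hcpt : IsCompact P := IsCompact.of_isClosed_subset isCompact_Icc hclosed hPsub
  have h0P : (fun _ => (0 : ℝ)) ∈ P := by
    refine ⟨fun p => le_refl 0, fun p _ => rfl, fun c => ?_, fun s => ?_⟩
    · simpa [rsum] using hνC c
    · simpa [csum] using hνS s
  have hcont : Continuous (fun T : C × S → ℝ => totm T) := by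
    unfold totm; exact continuous_finset_sum _ fun c _ => hrc c
  obtain ⟨T, hTP, hmax⟩ := hcpt.exists_isMaxOn (Set.nonempty_of_mem h0P) hcont.continuousOn
  exact ⟨T, hTP, fun T' a b c d => isMaxOn_iff.mp hmax T' ⟨a, b, c, d⟩⟩

private lemma core (E : Finset (C × S)) (νC : C → ℝ) (νS : S → ℝ)
    (hνC : ∀ c, 0 < νC c) (hνS : ∀ s, 0 < νS s)
    (hm : ∑ c : C, νC c = ∑ s : S, νS s)
    (hSedge : ∀ s : S, ∃ c, (c, s) ∈ E)
    (hstrict : ∀ U : Finset C, U.Nonempty → U ≠ Finset.univ →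
        ∑ c ∈ U, νC c < ∑ s ∈ univ.filter (fun s => ∃ c ∈ U, (c, s) ∈ E), νS s) :
    ∃ T : C × S → ℝ, (∀ p, 0 ≤ T p) ∧ (∀ p, p ∉ E → T p = 0) ∧
      (∀ c, rsum T c = νC c) ∧ (∀ s, csum T s = νS s) := by
  classical
  obtain ⟨T, ⟨h0, hoff, hr, hc⟩, hmax⟩ :=
    exists_max E νC νS (fun c => (hνC c).le) (fun s => (hνS s).le)
  have htot_le : totm T ≤ ∑ c : C, νC c := Finset.sum_le_sum fun c _ => hr c
  have htot : totm T = ∑ c : C, νC c := by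
    by_contra hne
    have htlt : totm T < ∑ c : C, νC c := lt_of_le_of_ne htot_le hne
    obtain ⟨c0, _, hc0⟩ := Finset.exists_lt_of_sum_lt
      (show ∑ c : C, rsum T c < ∑ c : C, νC c from htlt)
    have hno : ∀ s : S, ReflTransGen (resStep E T) (.inl c0) (.inr s) → ¬ csum T s < νS s := by
      intro s hreach hslack
      obtain ⟨n, ε, hε, H⟩ := aug E T h0 hoff c0 _ hreach
      set δ := min ε (min (νC c0 - rsum T c0) (νS s - csum T s)) with hδdef
      have hδpos : 0 < δ := lt_min hε (lt_min (by linarith) (by linarith))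
      obtain ⟨T', h0', _, hoff', hr', hc'⟩ := H δ hδpos (min_le_left _ _)
      have hr'' : ∀ c, rsum T' c ≤ νC c := by
        intro c
        rw [hr' c]
        rcases eq_or_ne c c0 with h | h
        · subst h
          have hd : δ ≤ νC c - rsum T c := le_trans (min_le_right _ _) (min_le_left _ _)
          simp only [indCv, if_pos rfl, sub_zero, mul_one, if_true]
          simp
          linarith
        · have := hr c
          simp only [indCv, if_neg h]
          simp
          linarith
      have hc'' : ∀ y, csum T' y ≤ νS y := by
        intro y
        rw [hc' y]
        rcases eq_or_ne s y with h | h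
        · subst h
          have hd : δ ≤ νS s - csum T s := le_trans (min_le_right _ _) (min_le_right _ _)
          simp only [indSv, if_pos rfl, mul_one]
          simp
          linarith
        · have := hc y
          simp only [indSv, if_neg h]
          simp
          linarith
      have hoff'' : ∀ p, p ∉ E → T' p = 0 := fun p hp => by rw [hoff' p hp]; exact hoff p hp
      have hle : totm T' ≤ totm T := hmax T' h0' hoff'' hr'' hc''
      have htot' : totm T' = totm T + δ := by
        unfold totm
        rw [Finset.sum_congr rfl fun c _ => hr' c, Finset.sum_add_distrib]
        have h5 : ∑ x : C, δ * ((if x = c0 then 1 else 0) - indCv (Sum.inr s) x) = δ := by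
          simp [indCv]
        rw [h5]
      linarith
    have htight : ∀ s : S, ReflTransGen (resStep E T) (.inl c0) (.inr s) → csum T s = νS s :=
      fun s hs => le_antisymm (hc s) (not_lt.mp (hno s hs))
    set U : Finset C := univ.filter (fun c => ReflTransGen (resStep E T) (.inl c0) (.inl c)) with hU
    set V : Finset S := univ.filter (fun s => ReflTransGen (resStep E T) (.inl c0) (.inr s)) with hV
    have hc0U : c0 ∈ U := Finset.mem_filter.mpr ⟨Finset.mem_univ _, ReflTransGen.refl⟩
    have hkey : ∑ s ∈ V, νS s < ∑ c ∈ U, νC c := by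
      have e1 : ∀ s ∈ V, csum T s = ∑ c ∈ U, T (c, s) := by
        intro s hsV
        have hsreach : ReflTransGen (resStep E T) (.inl c0) (.inr s) := by
          simpa [hV] using hsV
        unfold csum
        rw [← Finset.sum_subset (Finset.subset_univ U)]
        intro c _ hcU
        by_contra hTc
        have hpos : 0 < T (c, s) := lt_of_le_of_ne (h0 (c, s)) (Ne.symm hTc)
        have hre : ReflTransGen (resStep E T) (.inl c0) (.inl c) :=
          hsreach.tail (show resStep E T (.inr s) (.inl c) from hpos)
        exact hcU (by simp [hU, hre])
      calc ∑ s ∈ V, νS s = ∑ s ∈ V, ∑ c ∈ U, T (c, s) := by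
            refine Finset.sum_congr rfl fun s hsV => ?_
            rw [← e1 s hsV, htight s (by simpa [hV] using hsV)]
          _ = ∑ c ∈ U, ∑ s ∈ V, T (c, s) := Finset.sum_comm
          _ ≤ ∑ c ∈ U, rsum T c := by
            refine Finset.sum_le_sum fun c _ => ?_
            exact Finset.sum_le_sum_of_subset_of_nonneg (Finset.subset_univ V)
              (fun s _ _ => h0 (c, s))
          _ < ∑ c ∈ U, νC c :=
            Finset.sum_lt_sum (fun c _ => hr c) ⟨c0, hc0U, hc0⟩
    by_cases hUuniv : U = Finset.univ
    · have hVuniv : V = Finset.univ := by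
        refine Finset.eq_univ_iff_forall.mpr fun s => ?_
        obtain ⟨c, hcs⟩ := hSedge s
        have hcU : c ∈ U := hUuniv ▸ Finset.mem_univ c
        have hcreach : ReflTransGen (resStep E T) (.inl c0) (.inl c) := by simpa [hU] using hcU
        have hre : ReflTransGen (resStep E T) (.inl c0) (.inr s) :=
          hcreach.tail (show resStep E T (.inl c) (.inr s) from hcs)
        simp [hV, hre]
      rw [hUuniv, hVuniv, ← hm] at hkey
      exact lt_irrefl _ hkey
    · have h6 := hstrict U ⟨c0, hc0U⟩ hUuniv
      have h7 : ∑ s ∈ univ.filter (fun s => ∃ c ∈ U, (c, s) ∈ E), νS s ≤ ∑ s ∈ V, νS s := by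
        refine Finset.sum_le_sum_of_subset_of_nonneg ?_ (fun s _ _ => (hνS s).le)
        intro s hs
        simp only [Finset.mem_filter, Finset.mem_univ, true_and] at hs
        obtain ⟨c, hcU, hcs⟩ := hs
        have hcreach : ReflTransGen (resStep E T) (.inl c0) (.inl c) := by
          simpa [hU] using hcU
        have hre : ReflTransGen (resStep E T) (.inl c0) (.inr s) :=
          hcreach.tail (show resStep E T (.inl c) (.inr s) from hcs)
        simp [hV, hre]
      linarith
  have hreq : ∀ c, rsum T c = νC c := by
    intro c
    have hsum : ∑ c : C, (νC c - rsum T c) = 0 := by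
      rw [Finset.sum_sub_distrib, show ∑ c : C, rsum T c = ∑ c : C, νC c from htot, sub_self]
    have := (Finset.sum_eq_zero_iff_of_nonneg
      (fun c _ => sub_nonneg.mpr (hr c))).mp hsum c (Finset.mem_univ c)
    linarith
  have hceq : ∀ s, csum T s = νS s := by
    intro s
    have htots : ∑ s : S, csum T s = ∑ s : S, νS s := by
      rw [← totm_eq_csum, htot, hm]
    have hsum : ∑ s : S, (νS s - csum T s) = 0 := by
      rw [Finset.sum_sub_distrib, htots, sub_self]
    have := (Finset.sum_eq_zero_iff_of_nonneg
      (fun s _ => sub_nonneg.mpr (hc s))).mp hsum s (Finset.mem_univ s)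
    linarith
  exact ⟨T, h0, hoff, hreq, hceq⟩

end Core

section Main
variable {C S : Type*} [Fintype C] [Fintype S] [DecidableEq C] [DecidableEq S]

private lemma side_strictC (E : Finset (C × S)) (μC : C → ℝ) (μS : S → ℝ)
    (T : C × S → ℝ) (hT0 : ∀ p, 0 ≤ T p) (hTpos : ∀ p ∈ E, 0 < T p)
    (hsupp : ∀ p, p ∉ E → T p = 0)
    (hr : ∀ c, (∑ s : S, T (c, s)) = μC c) (hc : ∀ s, (∑ c : C, T (c, s)) = μS s)
    (U : Finset C) (c1 : C) (hc1 : c1 ∉ U) (s1 : S)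
    (hs1 : s1 ∈ univ.filter (fun s => ∃ c ∈ U, (c, s) ∈ E)) (he1 : (c1, s1) ∈ E) :
    ∑ c ∈ U, μC c < ∑ s ∈ univ.filter (fun s => ∃ c ∈ U, (c, s) ∈ E), μS s := by
  classical
  set W := univ.filter (fun s => ∃ c ∈ U, (c, s) ∈ E) with hW
  have eA : ∑ c ∈ U, μC c = ∑ s ∈ W, ∑ c ∈ U, T (c, s) := by
    calc ∑ c ∈ U, μC c = ∑ c ∈ U, ∑ s : S, T (c, s) :=
          Finset.sum_congr rfl fun c _ => (hr c).symm
      _ = ∑ s : S, ∑ c ∈ U, T (c, s) := Finset.sum_comm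
      _ = ∑ s ∈ W, ∑ c ∈ U, T (c, s) := by
          refine (Finset.sum_subset (Finset.subset_univ W) ?_).symm
          intro s _ hsW
          refine Finset.sum_eq_zero fun c hcU => ?_
          refine hsupp _ fun hE => ?_
          exact hsW (Finset.mem_filter.mpr ⟨Finset.mem_univ _, ⟨c, hcU, hE⟩⟩)
  have eB : ∑ s ∈ W, μS s = ∑ s ∈ W, ∑ c : C, T (c, s) :=
    Finset.sum_congr rfl fun s _ => (hc s).symm
  rw [eA, eB]
  refine Finset.sum_lt_sum (fun s _ => Finset.sum_le_sum_of_subset_of_nonneg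
    (Finset.subset_univ U) (fun c _ _ => hT0 (c, s))) ⟨s1, hs1, ?_⟩
  exact Finset.sum_lt_sum_of_subset (Finset.subset_univ U) (Finset.mem_univ c1) hc1
    (hTpos _ he1) (fun c _ _ => hT0 (c, s1))

private lemma side_strictS (E : Finset (C × S)) (μC : C → ℝ) (μS : S → ℝ)
    (T : C × S → ℝ) (hT0 : ∀ p, 0 ≤ T p) (hTpos : ∀ p ∈ E, 0 < T p)
    (hsupp : ∀ p, p ∉ E → T p = 0)
    (hr : ∀ c, (∑ s : S, T (c, s)) = μC c) (hc : ∀ s, (∑ c : C, T (c, s)) = μS s)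
    (V : Finset S) (s1 : S) (hs1 : s1 ∉ V) (c1 : C)
    (hc1 : c1 ∈ univ.filter (fun c => ∃ s ∈ V, (c, s) ∈ E)) (he1 : (c1, s1) ∈ E) :
    ∑ s ∈ V, μS s < ∑ c ∈ univ.filter (fun c => ∃ s ∈ V, (c, s) ∈ E), μC c := by
  classical
  set W := univ.filter (fun c => ∃ s ∈ V, (c, s) ∈ E) with hW
  have eA : ∑ s ∈ V, μS s = ∑ c ∈ W, ∑ s ∈ V, T (c, s) := by
    calc ∑ s ∈ V, μS s = ∑ s ∈ V, ∑ c : C, T (c, s) :=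
          Finset.sum_congr rfl fun s _ => (hc s).symm
      _ = ∑ c : C, ∑ s ∈ V, T (c, s) := Finset.sum_comm
      _ = ∑ c ∈ W, ∑ s ∈ V, T (c, s) := by
          refine (Finset.sum_subset (Finset.subset_univ W) ?_).symm
          intro c _ hcW
          refine Finset.sum_eq_zero fun s hsV => ?_
          refine hsupp _ fun hE => ?_
          exact hcW (Finset.mem_filter.mpr ⟨Finset.mem_univ _, ⟨s, hsV, hE⟩⟩)
  have eB : ∑ c ∈ W, μC c = ∑ c ∈ W, ∑ s : S, T (c, s) :=
    Finset.sum_congr rfl fun c _ => (hr c).symm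
  rw [eA, eB]
  refine Finset.sum_lt_sum (fun c _ => Finset.sum_le_sum_of_subset_of_nonneg
    (Finset.subset_univ V) (fun s _ _ => hT0 (c, s))) ⟨c1, hc1, ?_⟩
  exact Finset.sum_lt_sum_of_subset (Finset.subset_univ V) (Finset.mem_univ s1) hs1
    (hTpos _ he1) (fun s _ _ => hT0 (c1, s))

private lemma closed_under (E : Finset (C × S)) (A : C ⊕ S → Prop)
    (hstep : ∀ x y, bipAdj E x y → A x → A y) :
    ∀ x y, ReflTransGen (bipAdj E) x y → A x → A y := by
  intro x y h
  induction h with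
  | refl => exact id
  | tail hab step ih => exact fun hx => hstep _ _ step (ih hx)

private lemma cross_edgeC (E : Finset (C × S))
    (hconn : ∀ a b : C ⊕ S, ReflTransGen (bipAdj E) a b)
    (U : Finset C) (hUne : U.Nonempty) (hUuniv : U ≠ Finset.univ) :
    ∃ c1, c1 ∉ U ∧ ∃ s1, (∃ c ∈ U, (c, s1) ∈ E) ∧ (c1, s1) ∈ E := by
  classical
  by_contra hcon
  push_neg at hcon
  obtain ⟨c0, hc0⟩ := hUne
  obtain ⟨c1, hc1⟩ : ∃ c1, c1 ∉ U := by
    by_contra h; push_neg at h; exact hUuniv (Finset.eq_univ_iff_forall.mpr h)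
  have hA := closed_under E (fun x => match x with
      | .inl c => c ∈ U
      | .inr s => ∃ c ∈ U, (c, s) ∈ E) ?_ (.inl c0) (.inl c1) (hconn _ _) hc0
  · exact hc1 hA
  · rintro (c | s) (c' | s') hxy hx
    · exact hxy.elim
    · exact ⟨c, hx, hxy⟩
    · by_contra hcU
      exact absurd hxy (hcon c' hcU s hx)
    · exact hxy.elim

private lemma cross_edgeS (E : Finset (C × S))
    (hconn : ∀ a b : C ⊕ S, ReflTransGen (bipAdj E) a b)
    (V : Finset S) (hVne : V.Nonempty) (hVuniv : V ≠ Finset.univ) :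
    ∃ s1, s1 ∉ V ∧ ∃ c1, (∃ s ∈ V, (c1, s) ∈ E) ∧ (c1, s1) ∈ E := by
  classical
  by_contra hcon
  push_neg at hcon
  obtain ⟨s0, hs0⟩ := hVne
  obtain ⟨s1, hs1⟩ : ∃ s1, s1 ∉ V := by
    by_contra h; push_neg at h; exact hVuniv (Finset.eq_univ_iff_forall.mpr h)
  have hA := closed_under E (fun x => match x with
      | .inr s => s ∈ V
      | .inl c => ∃ s ∈ V, (c, s) ∈ E) ?_ (.inr s0) (.inr s1) (hconn _ _) hs0
  · exact hs1 hA
  · rintro (c | s) (c' | s') hxy hx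
    · exact hxy.elim
    · by_contra hsV
      exact absurd hxy (hcon s' hsV c hx)
    · exact ⟨s, hx, hxy⟩
    · exact hxy.elim

end Main

theorem positive_flow_value_one_iff_ncond
    (C S : Type*) [Fintype C] [Fintype S] [DecidableEq C] [DecidableEq S]
    (E : Finset (C × S))
    (hconn : ∀ a b : C ⊕ S, Relation.ReflTransGen (bipAdj E) a b)  -- connected
    (μC : C → ℝ) (μS : S → ℝ)
    (hμCpos : ∀ c, 0 < μC c) (hμSpos : ∀ s, 0 < μS s)
    (hμC1 : ∑ c : C, μC c = 1) (hμS1 : ∑ s : S, μS s = 1) :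
    (∃ T : C × S → ℝ,
        (∀ p, 0 ≤ T p) ∧
        (∀ c s, (c, s) ∉ E → T (c, s) = 0) ∧
        (∀ c s, (c, s) ∈ E → 0 < T (c, s)) ∧
        (∀ c : C, ∑ s : S, T (c, s) ≤ μC c) ∧
        (∀ s : S, ∑ c : C, T (c, s) ≤ μS s) ∧
        (∑ c : C, ∑ s : S, T (c, s) = 1)) ↔
    ((∀ U : Finset C, U.Nonempty → U ≠ Finset.univ →
        ∑ c ∈ U, μC c < ∑ s ∈ Finset.univ.filter (fun s => ∃ c ∈ U, (c, s) ∈ E), μS s) ∧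
     (∀ V : Finset S, V.Nonempty → V ≠ Finset.univ →
        ∑ s ∈ V, μS s < ∑ c ∈ Finset.univ.filter (fun c => ∃ s ∈ V, (c, s) ∈ E), μC c)) := by
  classical
  constructor
  · rintro ⟨T, h0, hoffcs, hposcs, hrle, hcle, htot1⟩
    have hoff : ∀ p : C × S, p ∉ E → T p = 0 := by
      rintro ⟨c, s⟩ hp; exact hoffcs c s hp
    have hpos : ∀ p ∈ E, 0 < T p := by
      rintro ⟨c, s⟩ hp; exact hposcs c s hp
    have hr : ∀ c, (∑ s : S, T (c, s)) = μC c := by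
      intro c
      have hsum : ∑ c : C, (μC c - ∑ s : S, T (c, s)) = 0 := by
        rw [Finset.sum_sub_distrib, hμC1, htot1, sub_self]
      have := (Finset.sum_eq_zero_iff_of_nonneg
        (fun c _ => sub_nonneg.mpr (hrle c))).mp hsum c (Finset.mem_univ c)
      linarith
    have hcs : ∀ s, (∑ c : C, T (c, s)) = μS s := by
      intro s
      have htot2 : ∑ s : S, ∑ c : C, T (c, s) = 1 := by
        rw [Finset.sum_comm]; exact htot1
      have hsum : ∑ s : S, (μS s - ∑ c : C, T (c, s)) = 0 := by
        rw [Finset.sum_sub_distrib, hμS1, htot2, sub_self]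
      have := (Finset.sum_eq_zero_iff_of_nonneg
        (fun s _ => sub_nonneg.mpr (hcle s))).mp hsum s (Finset.mem_univ s)
      linarith
    constructor
    · intro U hUne hUuniv
      obtain ⟨c1, hc1, s1, hs1W, he1⟩ := cross_edgeC E hconn U hUne hUuniv
      exact side_strictC E μC μS T h0 hpos hoff hr hcs U c1 hc1 s1
        (Finset.mem_filter.mpr ⟨Finset.mem_univ _, hs1W⟩) he1
    · intro V hVne hVuniv
      obtain ⟨s1, hs1, c1, hc1W, he1⟩ := cross_edgeS E hconn V hVne hVuniv
      exact side_strictS E μC μS T h0 hpos hoff hr hcs V s1 hs1 c1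
        (Finset.mem_filter.mpr ⟨Finset.mem_univ _, hc1W⟩) he1
  · rintro ⟨h1, -⟩
    have hCne : Nonempty C := by
      by_contra h
      rw [not_nonempty_iff] at h
      rw [Finset.univ_eq_empty, Finset.sum_empty] at hμC1
      exact zero_ne_one hμC1
    have hSne : Nonempty S := by
      by_contra h
      rw [not_nonempty_iff] at h
      rw [Finset.univ_eq_empty, Finset.sum_empty] at hμS1
      exact zero_ne_one hμS1
    have hSedge : ∀ s : S, ∃ c, (c, s) ∈ E := by
      intro s
      obtain ⟨c⟩ := hCne
      rcases (hconn (.inr s) (.inl c)).cases_head with heq | ⟨b, hstep, -⟩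
      · exact absurd heq (by simp)
      · match b, hstep with
        | .inl c', hstep => exact ⟨c', hstep⟩
        | .inr s', hstep => exact hstep.elim
    have hEne : E.Nonempty := by
      obtain ⟨s⟩ := hSne
      obtain ⟨c, hcsE⟩ := hSedge s
      exact ⟨(c, s), hcsE⟩
    set gap : Finset C → ℝ :=
      fun U => (∑ s ∈ univ.filter (fun s => ∃ c ∈ U, (c, s) ∈ E), μS s) - ∑ c ∈ U, μC c
      with hgap
    set G : Finset ℝ := insert 1
      (((univ.filter (fun U : Finset C => U.Nonempty ∧ U ≠ univ)).image gap)
        ∪ univ.image μC ∪ univ.image μS) with hG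
    have hGne : G.Nonempty := ⟨1, Finset.mem_insert_self _ _⟩
    have hGpos : ∀ x ∈ G, 0 < x := by
      intro x hx
      rw [hG, Finset.mem_insert] at hx
      rcases hx with rfl | hx
      · exact one_pos
      rw [Finset.mem_union, Finset.mem_union] at hx
      rcases hx with (hx | hx) | hx
      · rw [Finset.mem_image] at hx
        obtain ⟨U, hU, rfl⟩ := hx
        rw [Finset.mem_filter] at hU
        have := h1 U hU.2.1 hU.2.2
        rw [hgap]
        dsimp only
        linarith
      · obtain ⟨c, -, rfl⟩ := Finset.mem_image.mp hx
        exact hμCpos c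
      · obtain ⟨s, -, rfl⟩ := Finset.mem_image.mp hx
        exact hμSpos s
    set ε : ℝ := G.min' hGne / 2 with hε
    have hεpos : 0 < ε := by
      have := hGpos _ (G.min'_mem hGne)
      rw [hε]; linarith
    have hεlt : ∀ x ∈ G, ε < x := by
      intro x hx
      have h2 := G.min'_le x hx
      have h3 := hGpos _ (G.min'_mem hGne)
      rw [hε]; linarith
    have hμCG : ∀ c, μC c ∈ G := fun c => by
      rw [hG]
      exact Finset.mem_insert_of_mem (Finset.mem_union_left _
        (Finset.mem_union_right _ (Finset.mem_image_of_mem μC (Finset.mem_univ c))))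
    have hμSG : ∀ s, μS s ∈ G := fun s => by
      rw [hG]
      exact Finset.mem_insert_of_mem (Finset.mem_union_right _
        (Finset.mem_image_of_mem μS (Finset.mem_univ s)))
    have hgapG : ∀ U : Finset C, U.Nonempty → U ≠ Finset.univ → gap U ∈ G := by
      intro U hUne hUuniv
      rw [hG]
      exact Finset.mem_insert_of_mem (Finset.mem_union_left _ (Finset.mem_union_left _
        (Finset.mem_image_of_mem gap (Finset.mem_filter.mpr ⟨Finset.mem_univ _, hUne, hUuniv⟩))))
    have key : ∀ e : C × S, e ∈ E → ∃ Te : C × S → ℝ,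
        (∀ p, 0 ≤ Te p) ∧ (∀ p, p ∉ E → Te p = 0) ∧
        (∀ c, (∑ s : S, Te (c, s)) = μC c - (if c = e.1 then ε else 0)) ∧
        (∀ s, (∑ c : C, Te (c, s)) = μS s - (if s = e.2 then ε else 0)) := by
      rintro ⟨c1, s1⟩ he
      have posC : ∀ c, 0 < μC c - (if c = c1 then ε else 0) := by
        intro c
        rcases eq_or_ne c c1 with rfl | h
        · have := hεlt _ (hμCG c)
          rw [if_pos rfl]; linarith
        · rw [if_neg h]; have := hμCpos c; linarith
      have posS : ∀ s, 0 < μS s - (if s = s1 then ε else 0) := by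
        intro s
        rcases eq_or_ne s s1 with rfl | h
        · have := hεlt _ (hμSG s)
          rw [if_pos rfl]; linarith
        · rw [if_neg h]; have := hμSpos s; linarith
      have sumEq : ∑ c : C, (μC c - (if c = c1 then ε else 0))
          = ∑ s : S, (μS s - (if s = s1 then ε else 0)) := by
        rw [Finset.sum_sub_distrib, Finset.sum_sub_distrib, hμC1, hμS1]
        congr 1
        simp [Finset.sum_ite_eq']
      have strict : ∀ U : Finset C, U.Nonempty → U ≠ Finset.univ →
          ∑ c ∈ U, (μC c - (if c = c1 then ε else 0))
            < ∑ s ∈ univ.filter (fun s => ∃ c ∈ U, (c, s) ∈ E),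
                (μS s - (if s = s1 then ε else 0)) := by
        intro U hUne hUuniv
        have hg := h1 U hUne hUuniv
        have hgG := hεlt _ (hgapG U hUne hUuniv)
        rw [hgap] at hgG
        dsimp only at hgG
        have hL : ∑ c ∈ U, (μC c - (if c = c1 then ε else 0))
            = (∑ c ∈ U, μC c) - (if c1 ∈ U then ε else 0) := by
          rw [Finset.sum_sub_distrib]; congr 1; simp [Finset.sum_ite_eq']
        have hR : ∑ s ∈ univ.filter (fun s => ∃ c ∈ U, (c, s) ∈ E),
              (μS s - (if s = s1 then ε else 0))
            = (∑ s ∈ univ.filter (fun s => ∃ c ∈ U, (c, s) ∈ E), μS s)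
              - (if s1 ∈ univ.filter (fun s => ∃ c ∈ U, (c, s) ∈ E) then ε else 0) := by
          rw [Finset.sum_sub_distrib]; congr 1; simp [Finset.sum_ite_eq']
        rw [hL, hR]
        by_cases hc1U : c1 ∈ U
        · have hs1W : s1 ∈ univ.filter (fun s => ∃ c ∈ U, (c, s) ∈ E) :=
            Finset.mem_filter.mpr ⟨Finset.mem_univ _, ⟨c1, hc1U, he⟩⟩
          rw [if_pos hc1U, if_pos hs1W]
          linarith
        · rw [if_neg hc1U]
          by_cases hs1W : s1 ∈ univ.filter (fun s => ∃ c ∈ U, (c, s) ∈ E)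
          · rw [if_pos hs1W]; linarith
          · rw [if_neg hs1W]; linarith
      obtain ⟨Te, ha, hb, hc2, hd⟩ := core E (fun c => μC c - (if c = c1 then ε else 0))
        (fun s => μS s - (if s = s1 then ε else 0)) posC posS sumEq hSedge strict
      exact ⟨Te, ha, hb, fun c => hc2 c, fun s => hd s⟩
    choose Te hTe0 hTeoff hTer hTec using key
    have hNpos : (0 : ℝ) < (E.card : ℝ) := by
      exact_mod_cast Finset.card_pos.mpr hEne
    set F : C × S → ℝ :=
      fun p => (E.card : ℝ)⁻¹ * ∑ e ∈ E.attach, (Te e.1 e.2 p + if p = e.1 then ε else 0)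
      with hF
    have hterm0 : ∀ (e : {x // x ∈ E}) (p : C × S),
        0 ≤ Te e.1 e.2 p + if p = e.1 then ε else 0 := by
      intro e p
      have := hTe0 e.1 e.2 p
      split <;> linarith
    have hrow : ∀ c, (∑ s : S, F (c, s)) = μC c := by
      intro c
      have hinner : ∀ e : {x // x ∈ E},
          (∑ s : S, (Te e.1 e.2 (c, s) + if ((c, s) : C × S) = e.1 then ε else 0)) = μC c := by
        intro e
        rw [Finset.sum_add_distrib, hTer e.1 e.2 c]
        have h5 : (∑ s : S, if ((c, s) : C × S) = e.1 then ε else 0)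
            = if c = e.1.1 then ε else 0 := by
          have h6 := sum_ite_pair_s e.1.1 e.1.2 c ε
          rw [Prod.mk.eta] at h6
          exact h6
        rw [h5]
        ring
      calc ∑ s : S, F (c, s)
          = (E.card : ℝ)⁻¹ * ∑ e ∈ E.attach,
              (∑ s : S, (Te e.1 e.2 (c, s) + if ((c, s) : C × S) = e.1 then ε else 0)) := by
            rw [hF]; dsimp only; rw [← Finset.mul_sum, Finset.sum_comm]
        _ = (E.card : ℝ)⁻¹ * ∑ _e ∈ E.attach, μC c := by
            rw [Finset.sum_congr rfl fun e _ => hinner e]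
        _ = μC c := by
            rw [Finset.sum_const, Finset.card_attach, nsmul_eq_mul, ← mul_assoc,
              inv_mul_cancel₀ (ne_of_gt hNpos), one_mul]
    have hcol : ∀ s, (∑ c : C, F (c, s)) = μS s := by
      intro s
      have hinner : ∀ e : {x // x ∈ E},
          (∑ c : C, (Te e.1 e.2 (c, s) + if ((c, s) : C × S) = e.1 then ε else 0)) = μS s := by
        intro e
        rw [Finset.sum_add_distrib, hTec e.1 e.2 s]
        have h5 : (∑ c : C, if ((c, s) : C × S) = e.1 then ε else 0)
            = if s = e.1.2 then ε else 0 := by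
          have h6 := sum_ite_pair_c e.1.1 e.1.2 s ε
          rw [Prod.mk.eta] at h6
          exact h6
        rw [h5]
        ring
      calc ∑ c : C, F (c, s)
          = (E.card : ℝ)⁻¹ * ∑ e ∈ E.attach,
              (∑ c : C, (Te e.1 e.2 (c, s) + if ((c, s) : C × S) = e.1 then ε else 0)) := by
            rw [hF]; dsimp only; rw [← Finset.mul_sum, Finset.sum_comm]
        _ = (E.card : ℝ)⁻¹ * ∑ _e ∈ E.attach, μS s := by
            rw [Finset.sum_congr rfl fun e _ => hinner e]
        _ = μS s := by
            rw [Finset.sum_const, Finset.card_attach, nsmul_eq_mul, ← mul_assoc,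
              inv_mul_cancel₀ (ne_of_gt hNpos), one_mul]
    refine ⟨F, ?_, ?_, ?_, fun c => le_of_eq (hrow c), fun s => le_of_eq (hcol s), ?_⟩
    · intro p
      rw [hF]
      exact mul_nonneg (inv_nonneg.mpr hNpos.le) (Finset.sum_nonneg fun e _ => hterm0 e p)
    · intro c s hcsE
      rw [hF]
      dsimp only
      refine mul_eq_zero_of_right _ (Finset.sum_eq_zero fun e _ => ?_)
      have h6 : ¬ ((c, s) : C × S) = e.1 := fun h => hcsE (by rw [h]; exact e.2)
      rw [hTeoff e.1 e.2 _ hcsE, if_neg h6, add_zero]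
    · intro c s hcsE
      rw [hF]
      dsimp only
      refine mul_pos (inv_pos.mpr hNpos) ?_
      have hle := Finset.single_le_sum (f := fun e : {x // x ∈ E} =>
          Te e.1 e.2 (c, s) + if ((c, s) : C × S) = e.1 then ε else 0)
        (fun e _ => hterm0 e (c, s)) (Finset.mem_attach E ⟨(c, s), hcsE⟩)
      refine lt_of_lt_of_le ?_ hle
      dsimp only
      have h8 : ((c, s) : C × S) = ((⟨(c, s), hcsE⟩ : {x // x ∈ E}) : C × S) := rfl
      rw [if_pos h8]
      exact add_pos_of_nonneg_of_pos (hTe0 _ _ _) hεpos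
    · rw [Finset.sum_congr rfl fun c _ => hrow c, hμC1]
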